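/- For every p with 0 < p ≤ 5/6, the equation π₃(y) = y has exactly one solution in [0,1], namely y = 1/2. -/
import Mathlib


/-- The urn function of the ERW with `k = 3` extractions:
`π₃(y) = (1-p) + (2p-1)(3y² - 2y³)`. -/
noncomputable def pi3 (p y : ℝ) : ℝ :=
  (1 - p) + (2 * p - 1) * (3 * y ^ 2 - 2 * y ^ 3)

theorem stmt_7 (p : ℝ) (hp0 : 0 < p) (hp1 : p ≤ 5 / 6) :
    ∀ y ∈ Set.Icc (0 : ℝ) 1, (pi3 p y = y ↔ y = 1 / 2) := by
  rintro y ⟨hy0, hy1⟩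
  constructor
  · intro h
    have key : (y - 1/2) * (2*(2*p-1)*(y*(1-y)) + 2*(p-1)) = 0 := by
      unfold pi3 at h; linear_combination h
    rcases mul_eq_zero.mp key with h1 | h2
    · linarith
    · by_contra hne
      have hsq : (2*y - 1)^2 > 0 := by
        have : 2*y - 1 ≠ 0 := fun hc => hne (by linarith)
        positivity
      nlinarith [mul_nonneg hy0 (by linarith : (0:ℝ) ≤ 1 - y), sq_nonneg (2*y-1),
        mul_pos hp0 hsq]
  · intro h; subst h; unfold pi3; ring
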